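/- Suppose r ≥ 1 and A ∈ E_k(n,r). For any fixed 1 ≤ i,j ≤ n, the block A^i_j = (a^{i i_2⋯i_r}_{j j_2⋯j_r}), after re-indexing its rows and columns by the forgetful map omitting the initial term of each multi-index, belongs to E_k(n,r-1)^i_j. -/
import Mathlib


open Finset

/-- The value-type of a multi-index `i ∈ I(n,r)`, encoded as the equivalence
relation on places whose classes are the blocks `{α : i α = v}`. -/
def vt {n r : ℕ} (i : Fin r → Fin n) : Fin r → Fin r → Prop :=
  fun a b => i a = i b

/-- Condition (G): for each place `α` and each pair of multi-indices obtained by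
deleting place `α`, all row and column `α`-slice sums equal a common scalar. -/
def CondG (k : Type*) [CommRing k] (n r : ℕ)
    (A : Matrix (Fin r → Fin n) (Fin r → Fin n) k) : Prop :=
  ∀ (α : Fin r) (i j : Fin r → Fin n), ∃ b : k,
    (∀ y : Fin n, (∑ x : Fin n, A (Function.update i α x) (Function.update j α y)) = b) ∧
    (∀ x : Fin n, (∑ y : Fin n, A (Function.update i α x) (Function.update j α y)) = b)

/-- Condition (H): entries vanish when row and column indices have different value-types. -/
def CondH (k : Type*) [CommRing k] (n r : ℕ)
    (A : Matrix (Fin r → Fin n) (Fin r → Fin n) k) : Prop :=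
  ∀ i j : Fin r → Fin n, vt i ≠ vt j → A i j = 0

/-- Condition (S): invariance under simultaneous place permutation of rows and columns. -/
def CondS (k : Type*) [CommRing k] (n r : ℕ)
    (A : Matrix (Fin r → Fin n) (Fin r → Fin n) k) : Prop :=
  ∀ (σ : Equiv.Perm (Fin r)) (i j : Fin r → Fin n), A (i ∘ σ) (j ∘ σ) = A i j

/-- Membership in the centralizer algebra `E_k(n,r) = End_{P_r(n)}(V^{⊗r})`. -/
def MemE (k : Type*) [CommRing k] (n r : ℕ)
    (A : Matrix (Fin r → Fin n) (Fin r → Fin n) k) : Prop :=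
  CondG k n r A ∧ CondH k n r A ∧ CondS k n r A

/-- The restriction `ρ(A) ∈ Mat_{I(n,r-1)}(k)`: its `(p,q)`-entry is the slice sum
`Σ_x a^{p x}_{q 0}`, which for `A ∈ E_k(n,r)` is the common value of all slice
sums of `A` indexed by `p, q`. -/
def rho (k : Type*) [CommRing k] (n r : ℕ) [NeZero n]
    (A : Matrix (Fin (r+1) → Fin n) (Fin (r+1) → Fin n) k) :
    Matrix (Fin r → Fin n) (Fin r → Fin n) k :=
  Matrix.of fun p q => ∑ x : Fin n, A (Fin.snoc p x) (Fin.snoc q 0)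

/-- The `k`-module `E_k(n,r)^i_j` of special invariants: those `A ∈ E_k(n,r)` such
that `A s t ≠ 0` implies `Λ_i(s) = Λ_j(t)`. -/
def MemESpec (k : Type*) [CommRing k] (n r : ℕ) (i j : Fin n)
    (A : Matrix (Fin r → Fin n) (Fin r → Fin n) k) : Prop :=
  MemE k n r A ∧ ∀ s t : Fin r → Fin n, A s t ≠ 0 → ∀ α : Fin r, s α = i ↔ t α = j

/-- The `r`-th Kronecker power `P(w)^{⊗r}` of the permutation matrix of `w`. -/
def kron (k : Type*) [CommRing k] (n r : ℕ) (w : Equiv.Perm (Fin n)) :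
    Matrix (Fin r → Fin n) (Fin r → Fin n) k :=
  Matrix.of fun i j => if i = ⇑w ∘ j then 1 else 0

/-- For `r ≥ 1` (represented as `r+1`) and `A ∈ E_k(n,r)`, each block `A^i_j`
(re-indexed by the forgetful map omitting the initial term of each multi-index)
belongs to `E_k(n,r-1)^i_j`. -/
theorem stmt_8 {k : Type*} [CommRing k] {n r : ℕ}
    (A : Matrix (Fin (r+1) → Fin n) (Fin (r+1) → Fin n) k)
    (hA : MemE k n (r+1) A) (i j : Fin n) :
    MemESpec k n r i j
      (Matrix.of fun s t : Fin r → Fin n => A (Fin.cons i s) (Fin.cons j t)) := by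
  obtain ⟨hG, hH, hS⟩ := hA
  refine ⟨⟨?_, ?_, ?_⟩, ?_⟩
  · -- CondG
    intro α p q
    obtain ⟨b, hb1, hb2⟩ := hG α.succ (Fin.cons i p) (Fin.cons j q)
    refine ⟨b, ?_, ?_⟩
    · intro y
      simpa [← Fin.cons_update] using hb1 y
    · intro x
      simpa [← Fin.cons_update] using hb2 x
  · -- CondH
    intro s t h
    apply hH
    intro heq
    apply h
    funext a b
    have := congrFun (congrFun heq a.succ) b.succ
    simpa [vt] using this
  · -- CondS
    intro σ s t
    have key := hS (Equiv.Perm.decomposeFin.symm (0, σ)) (Fin.cons i s) (Fin.cons j t)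
    have h1 : (Fin.cons i s : Fin (r+1) → Fin n) ∘ (Equiv.Perm.decomposeFin.symm (0, σ))
        = Fin.cons i (s ∘ σ) := by
      funext a
      refine Fin.cases ?_ (fun b => ?_) a <;>
        simp [Equiv.Perm.decomposeFin_symm_apply_zero,
          Equiv.Perm.decomposeFin_symm_apply_succ]
    have h2 : (Fin.cons j t : Fin (r+1) → Fin n) ∘ (Equiv.Perm.decomposeFin.symm (0, σ))
        = Fin.cons j (t ∘ σ) := by
      funext a
      refine Fin.cases ?_ (fun b => ?_) a <;>
        simp [Equiv.Perm.decomposeFin_symm_apply_zero,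
          Equiv.Perm.decomposeFin_symm_apply_succ]
    simpa [h1, h2] using key
  · -- special condition
    intro s t hst α
    have hvt : vt (Fin.cons i s) = vt (Fin.cons j t) := by
      by_contra h
      exact hst (hH _ _ h)
    have := congrFun (congrFun hvt α.succ) 0
    simp only [vt, Fin.cons_succ, Fin.cons_zero, eq_iff_iff] at this
    exact this
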